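/- Let K be a field, V a finite-dimensional K-vector space, and s : V → V an invertible K-linear map of finite multiplicative order d > 1 which fixes pointwise some hyperplane of V (a linear subspace of codimension 1). Then s is diagonalizable — that is, V is spanned by eigenvectors of s (equivalently, V is the sum of the eigenspaces of s) — if and only if d is not divisible by the characteristic of K. In particular, such an s is always diagonalizable when char K = 0. -/
import Mathlib


/-- A pseudo-reflection (an invertible linear map of finite order `d > 1` of a
finite-dimensional `K`-vector space fixing a hyperplane pointwise) is diagonalizable — i.e.
the eigenspaces of `s` span `V` — if and only if `d` is not divisible by the characteristic
of `K`. -/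
theorem stmt3 {K : Type*} [Field K] {V : Type*} [AddCommGroup V] [Module K V]
    [FiniteDimensional K V] (s : V ≃ₗ[K] V) (d : ℕ) (hd : 1 < d) (hord : orderOf s = d)
    (H : Submodule K V) (hH : Module.finrank K H = Module.finrank K V - 1)
    (hfix : ∀ x ∈ H, s x = x) :
    (⨆ μ : K, Module.End.eigenspace (s : V →ₗ[K] V) μ) = ⊤ ↔ ¬ (ringChar K ∣ d) := by
  set N : V →ₗ[K] V := (s : V →ₗ[K] V) - LinearMap.id with hNdef
  have hNapp : ∀ v : V, N v = s v - v := by intro v; simp [hNdef]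
  have hsapp : ∀ v : V, s v = v + N v := by intro v; rw [hNapp]; abel
  -- s ≠ 1
  have hs1 : s ≠ 1 := by
    intro h
    rw [h, orderOf_one] at hord
    omega
  have hN0 : N ≠ 0 := by
    intro h
    apply hs1
    ext v
    have h1 := hNapp v
    rw [h] at h1
    simp only [LinearMap.zero_apply] at h1
    simpa using (sub_eq_zero.mp h1.symm)
  -- H ≤ ker N
  have hHker : H ≤ LinearMap.ker N := by
    intro x hx
    simp [LinearMap.mem_ker, hNapp, hfix x hx]
  have hrange_ne : LinearMap.range N ≠ ⊥ := by
    intro h; exact hN0 (LinearMap.range_eq_bot.mp h)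
  have hrange_pos : 0 < Module.finrank K (LinearMap.range N) := by
    rw [Module.finrank_pos_iff]
    exact Submodule.nontrivial_iff_ne_bot.mpr hrange_ne
  have hrn : Module.finrank K (LinearMap.range N) + Module.finrank K (LinearMap.ker N)
      = Module.finrank K V := LinearMap.finrank_range_add_finrank_ker N
  have hkge : Module.finrank K V - 1 ≤ Module.finrank K (LinearMap.ker N) := by
    rw [← hH]; exact Submodule.finrank_mono hHker
  have hr1 : Module.finrank K (LinearMap.range N) = 1 := by omega
  -- get a generator w of range N
  obtain ⟨w, hw_mem, hw0⟩ := Submodule.exists_mem_ne_zero_of_ne_bot hrange_ne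
  have hspan : Submodule.span K {w} = LinearMap.range N := by
    apply Submodule.eq_of_le_of_finrank_le
    · simpa [Submodule.span_singleton_le_iff_mem] using hw_mem
    · rw [hr1, finrank_span_singleton hw0]
  have hmemw : ∀ v : V, ∃ a : K, N v = a • w := by
    intro v
    have : N v ∈ Submodule.span K {w} := hspan ▸ LinearMap.mem_range_self N v
    rcases Submodule.mem_span_singleton.mp this with ⟨a, ha⟩
    exact ⟨a, ha.symm⟩
  obtain ⟨c, hc⟩ := hmemw w
  -- the key pointwise pow lemma for eigenvectors
  have pow_eig : ∀ (k : ℕ) (μ : K) (v : V), s v = μ • v → (s ^ k) v = μ ^ k • v := by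
    intro k
    induction k with
    | zero => intro μ v _; simp
    | succ k ih =>
      intro μ v hv
      have : (s ^ (k + 1)) v = (s ^ k) (s v) := by rw [pow_succ]; rfl
      rw [this, hv, map_smul, ih μ v hv, smul_smul, ← pow_succ']
  have hsd : s ^ d = 1 := by rw [← hord]; exact pow_orderOf_eq_one s
  by_cases hc0 : c = 0
  · -- transvection case: N ∘ N = 0, not diagonalizable, char K ∣ d
    have hNN : ∀ v : V, N (N v) = 0 := by
      intro v
      rcases hmemw v with ⟨a, ha⟩
      rw [ha, map_smul, hc, hc0, zero_smul, smul_zero]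
    -- s ^ k v = v + k • N v
    have hpow : ∀ (k : ℕ) (v : V), (s ^ k) v = v + (k : K) • N v := by
      intro k
      induction k with
      | zero => intro v; simp
      | succ k ih =>
        intro v
        have h1 : (s ^ (k + 1)) v = (s ^ k) (s v) := by rw [pow_succ]; rfl
        rw [h1, hsapp v, map_add, ih v, ih (N v), hNN v, smul_zero, add_zero]
        push_cast
        rw [add_smul, one_smul]
        abel
    -- char K ∣ d
    have hdvd : ringChar K ∣ d := by
      obtain ⟨v0, hv0⟩ : ∃ v, N v ≠ 0 := by
        by_contra h
        push_neg at h
        exact hN0 (LinearMap.ext fun v => by simpa using h v)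
      have h2 := hpow d v0
      rw [hsd] at h2
      have h3 : v0 = v0 + (d : K) • N v0 := h2
      have hz : (d : K) • N v0 = 0 := by
        have := h3.symm
        rwa [add_eq_left] at this
      rcases smul_eq_zero.mp hz with h | h
      · exact ringChar.dvd h
      · exact absurd h hv0
    -- not diagonalizable
    have hsup : ¬ (⨆ μ : K, Module.End.eigenspace (s : V →ₗ[K] V) μ) = ⊤ := by
      intro htop
      have hle : (⨆ μ : K, Module.End.eigenspace (s : V →ₗ[K] V) μ) ≤ LinearMap.ker N := by
        apply iSup_le
        intro μ v hv
        rw [Module.End.mem_eigenspace_iff] at hv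
        have hv' : s v = μ • v := by simpa using hv
        have hNv : N v = (μ - 1) • v := by
          rw [hNapp, hv', sub_smul, one_smul]
        have hsq : (μ - 1) • ((μ - 1) • v) = 0 := by
          rw [← hNv, ← map_smul, ← hNv, hNN]
        by_cases hμ : μ = 1
        · simp [LinearMap.mem_ker, hNv, hμ]
        · have h1 : μ - 1 ≠ 0 := sub_ne_zero.mpr hμ
          rcases smul_eq_zero.mp hsq with h | h
          · exact absurd h h1
          · rcases smul_eq_zero.mp h with h' | h'
            · exact absurd h' h1
            · simp [LinearMap.mem_ker, hNv, h']
      rw [htop, top_le_iff, LinearMap.ker_eq_top] at hle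
      exact hN0 hle
    exact iff_of_false hsup (not_not_intro hdvd)
  · -- diagonalizable case: s w = (1 + c) • w with c ≠ 0
    set lam : K := 1 + c with hlam
    have hsw : s w = lam • w := by
      rw [hsapp, hc, hlam, add_smul, one_smul]
    have hker_eigen : ∀ v : V, N v = 0 → s v = (1 : K) • v := by
      intro v hv
      rw [hsapp, hv, add_zero, one_smul]
    -- decomposition: every v is a sum of an eigenvector for 1 and one for lam
    have hdecomp : ∀ v : V, ∃ u x : V, s u = (1 : K) • u ∧ s x = lam • x ∧ v = u + x := by
      intro v
      rcases hmemw v with ⟨a, ha⟩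
      refine ⟨v - (a / c) • w, (a / c) • w, ?_, ?_, by abel⟩
      · apply hker_eigen
        rw [map_sub, map_smul, ha, hc, smul_smul, div_mul_cancel₀ a hc0, sub_self]
      · rw [map_smul, hsw, smul_comm]
    -- diagonalizable
    have htop : (⨆ μ : K, Module.End.eigenspace (s : V →ₗ[K] V) μ) = ⊤ := by
      rw [eq_top_iff]
      intro v _
      rcases hdecomp v with ⟨u, x, hu, hx, hv⟩
      rw [hv]
      refine Submodule.add_mem _ ?_ ?_
      · exact Submodule.mem_iSup_of_mem 1
          (Module.End.mem_eigenspace_iff.mpr (by simpa using hu))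
      · exact Submodule.mem_iSup_of_mem lam
          (Module.End.mem_eigenspace_iff.mpr (by simpa using hx))
    -- char K does not divide d
    have hnd : ¬ ringChar K ∣ d := by
      intro hpd
      have hlamd : lam ^ d = 1 := by
        have h0 := pow_eig d lam w hsw
        rw [hsd] at h0
        have h0' : w = lam ^ d • w := h0
        have h1 : lam ^ d • w = (1 : K) • w := by rw [← h0', one_smul]
        have := sub_eq_zero.mpr h1
        rw [← sub_smul] at this
        rcases smul_eq_zero.mp this with h | h
        · exact sub_eq_zero.mp h
        · exact absurd h hw0
      set p := ringChar K with hp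
      rcases CharP.char_is_prime_or_zero K p with hprime | hzero
      · haveI : Fact p.Prime := ⟨hprime⟩
        obtain ⟨m, hm⟩ := hpd
        have hm0 : m ≠ 0 := by rintro rfl; omega
        have hlamm : lam ^ m = 1 := by
          have h1 : (lam ^ m) ^ p = 1 := by
            rw [← pow_mul, mul_comm, ← hm, hlamd]
          have h2 : (lam ^ m - 1) ^ p = 0 := by
            rw [sub_pow_char, h1, one_pow, sub_self]
          have h3 := pow_eq_zero_iff (Nat.Prime.ne_zero hprime) |>.mp h2
          exact sub_eq_zero.mp h3
        have hsm : s ^ m = 1 := by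
          ext v
          rcases hdecomp v with ⟨u, x, hu, hx, hv⟩
          have h1 := pow_eig m 1 u hu
          have h2 := pow_eig m lam x hx
          show (s ^ m) v = v
          rw [hv, map_add, h1, h2, hlamm, one_pow, one_smul, one_smul]
        have hle : d ≤ m := by
          rw [← hord]
          exact orderOf_le_of_pow_eq_one (Nat.pos_of_ne_zero hm0) hsm
        have hp2 : 2 ≤ p := hprime.two_le
        nlinarith [Nat.pos_of_ne_zero hm0]
      · rw [hzero] at hpd
        rcases hpd with ⟨k, hk⟩
        omega
    exact iff_of_true htop hnd
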